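/- arXiv:2107.10619 — 3 statements merged into one kernel-verified Lean document; each statement's English description precedes it below -/
import Mathlib

section
/- Let m ≥ 4, let G = (ℤ/mℤ)², let g ∈ G, and let S = f₁^[m−1] · f₂^[m−1] · (f₁+f₂) ∈ Υ_nu(G), where (f₁,f₂) is a basis of G. If S' = f₂^[−1] · (f₁+f₂)^[−1] · S · (f₂+g) · (f₁+f₂−g) ∈ Υ(G), then g ∈ ⟨f₁⟩. -/
/-- `(e₁, e₂)` is a basis of the abelian group `G`, i.e. `G = ⟨e₁⟩ ⊕ ⟨e₂⟩`. -/
def IsBasis {G : Type*} [AddCommGroup G] (e₁ e₂ : G) : Prop :=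
  AddSubgroup.zmultiples e₁ ⊔ AddSubgroup.zmultiples e₂ = ⊤ ∧
    AddSubgroup.zmultiples e₁ ⊓ AddSubgroup.zmultiples e₂ = ⊥

/-- `Υ(G)` for `G = (ℤ/mℤ)²`: all sequences `e₁^[m-1] · ∏_{i=1}^m (xᵢe₁ + e₂)` for some
basis `(e₁, e₂)` and `x₁, …, x_m ∈ [0, m-1]` with `x₁ + ⋯ + x_m ≡ 1 (mod m)`. -/
def Upsilon (m : ℕ) : Set (Multiset (ZMod m × ZMod m)) :=
  { S | ∃ (e₁ e₂ : ZMod m × ZMod m) (x : Fin m → ℕ),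
      IsBasis e₁ e₂ ∧ (∀ i, x i ≤ m - 1) ∧ (∑ i, x i) % m = 1 % m ∧
      S = Multiset.replicate (m - 1) e₁ +
          Multiset.map (fun i => x i • e₁ + e₂) (Finset.univ : Finset (Fin m)).val }

/-- `Υ_u(G)`: members of `Υ(G)` with a unique term of multiplicity `m - 1`. -/
def UpsilonU (m : ℕ) : Set (Multiset (ZMod m × ZMod m)) :=
  { S | S ∈ Upsilon m ∧ ∃! g, S.count g = m - 1 }

/-- `Υ_nu(G)`: sequences `e₁^[m-1] · e₂^[m-1] · (e₁ + e₂)` for some basis `(e₁, e₂)`. -/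
def UpsilonNU (m : ℕ) : Set (Multiset (ZMod m × ZMod m)) :=
  { S | ∃ (e₁ e₂ : ZMod m × ZMod m), IsBasis e₁ e₂ ∧
      S = Multiset.replicate (m - 1) e₁ + Multiset.replicate (m - 1) e₂ + {e₁ + e₂} }

lemma zmult_ne_top (m : ℕ) (hm : 2 ≤ m) (x : ZMod m × ZMod m) :
    AddSubgroup.zmultiples x ≠ ⊤ := by
  intro h
  haveI : NeZero m := ⟨by omega⟩
  have h1 : Nat.card (AddSubgroup.zmultiples x) = addOrderOf x := Nat.card_zmultiples x
  have h2 : addOrderOf x ∣ m := by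
    have : m • x = 0 := by
      ext <;> simp [nsmul_eq_mul, ZMod.natCast_self]
    exact addOrderOf_dvd_of_nsmul_eq_zero this
  have h3 : Nat.card (AddSubgroup.zmultiples x) = m * m := by
    rw [h]
    rw [Nat.card_congr AddSubgroup.topEquiv.toEquiv]
    simp [Nat.card_prod, Nat.card_zmod, sq]
  have := Nat.le_of_dvd (by omega) h2
  nlinarith [h1, h3]

lemma count_two {G : Type*} [DecidableEq G] (a b : G) (hab : a ≠ b) (M : Multiset G) :
    M.count a + M.count b ≤ Multiset.card M := by
  have hle : Multiset.replicate (M.count a) a + Multiset.replicate (M.count b) b ≤ M := by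
    rw [Multiset.le_iff_count]
    intro c
    simp only [Multiset.count_add, Multiset.count_replicate]
    rcases eq_or_ne c a with rfl | h1 <;> rcases eq_or_ne c b with rfl | h2
    · exact absurd rfl hab
    · simp [Ne.symm hab]
    · simp [hab]
    · simp [Ne.symm h1, Ne.symm h2]
  simpa using Multiset.card_le_card hle

theorem stmt_7 (m : ℕ) (hm : 4 ≤ m) (g f₁ f₂ : ZMod m × ZMod m)
    (hbasis : IsBasis f₁ f₂)
    (S : Multiset (ZMod m × ZMod m))
    (hS : S = Multiset.replicate (m - 1) f₁ + Multiset.replicate (m - 1) f₂ + {f₁ + f₂})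
    (hSNU : S ∈ UpsilonNU m)
    (S' : Multiset (ZMod m × ZMod m))
    (hS' : S' = (S - {f₂, f₁ + f₂}) + {f₂ + g, f₁ + f₂ - g})
    (hS'U : S' ∈ Upsilon m) :
    g ∈ AddSubgroup.zmultiples f₁ := by
  by_contra hg
  obtain ⟨hsup, hinf⟩ := hbasis
  have hf1ne0 : f₁ ≠ 0 := by
    rintro rfl; apply zmult_ne_top m (by omega) f₂; rw [← hsup]; simp
  have hf2ne0 : f₂ ≠ 0 := by
    rintro rfl; apply zmult_ne_top m (by omega) f₁; rw [← hsup]; simp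
  have hf12 : f₁ ≠ f₂ := by
    rintro rfl; apply zmult_ne_top m (by omega) f₁; rw [← hsup]; simp
  have hg0 : f₂ + g ≠ f₂ := fun h =>
    hg (by rw [add_eq_left.mp h]; exact AddSubgroup.zero_mem _)
  have hgf1 : f₁ + f₂ - g ≠ f₂ := by
    intro h
    have : g = f₁ := by linear_combination -h
    exact hg (this ▸ AddSubgroup.mem_zmultiples f₁)
  have h12f1 : f₁ + f₂ ≠ f₁ := by
    intro h; exact hf2ne0 (by linear_combination h)
  have h12f2 : f₁ + f₂ ≠ f₂ := by
    intro h; exact hf1ne0 (by linear_combination h)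
  have hcount1 : S'.count f₁ =
      (m - 1) + ((if f₁ = f₂ + g then 1 else 0) + (if f₁ = f₁ + f₂ - g then 1 else 0)) := by
    rw [hS', hS, Multiset.count_add, Multiset.count_sub]
    simp only [Multiset.count_add, Multiset.count_replicate, Multiset.insert_eq_cons,
      Multiset.count_cons, Multiset.count_singleton, eq_self_iff_true, if_true,
      if_neg (Ne.symm hf12), if_neg hf12, if_neg (Ne.symm h12f1)]
    omega
  have hcount2 : S'.count f₂ = m - 2 := by
    rw [hS', hS, Multiset.count_add, Multiset.count_sub]
    simp only [Multiset.count_add, Multiset.count_replicate, Multiset.insert_eq_cons,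
      Multiset.count_cons, Multiset.count_singleton, eq_self_iff_true, if_true,
      if_neg hf12, if_neg (Ne.symm h12f2), if_neg (Ne.symm hg0), if_neg (Ne.symm hgf1)]
    omega
  have hf2gmem : f₂ + g ∈ S' := by
    rw [hS']; simp
  have hf2mem : f₂ ∈ S' := by
    rw [← Multiset.count_pos, hcount2]; omega
  obtain ⟨e₁, e₂, x, ⟨hesup, heinf⟩, hxle, hxsum, hrepr⟩ := hS'U
  have he2 : e₂ ∉ AddSubgroup.zmultiples e₁ := by
    intro hmem
    apply zmult_ne_top m (by omega) e₁
    rw [← hesup]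
    simp [sup_eq_left, AddSubgroup.zmultiples_le, hmem]
  set M := Multiset.map (fun i => x i • e₁ + e₂) (Finset.univ : Finset (Fin m)).val with hM
  have hMcard : Multiset.card M = m := by simp [hM]
  have hcountE : ∀ a, S'.count a = (if e₁ = a then m - 1 else 0) + M.count a := by
    intro a
    rw [hrepr, Multiset.count_add, Multiset.count_replicate]
  have hMe₁ : M.count e₁ = 0 := by
    rw [Multiset.count_eq_zero]
    intro hmem
    rw [hM, Multiset.mem_map] at hmem
    obtain ⟨i, -, hi⟩ := hmem
    apply he2
    refine ⟨1 - (x i : ℤ), ?_⟩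
    show (1 - (x i : ℤ)) • e₁ = e₂
    rw [sub_smul, one_smul, natCast_zsmul]
    exact (eq_sub_of_add_eq' hi).symm
  have hcoset : ∀ a, a ∈ S' → a ≠ e₁ → a - e₂ ∈ AddSubgroup.zmultiples e₁ := by
    intro a ha hane
    rw [hrepr, Multiset.mem_add] at ha
    rcases ha with ha | ha
    · exact absurd (Multiset.eq_of_mem_replicate ha) hane
    · rw [hM, Multiset.mem_map] at ha
      obtain ⟨i, -, hi⟩ := ha
      refine ⟨(x i : ℤ), ?_⟩
      show (x i : ℤ) • e₁ = a - e₂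
      rw [natCast_zsmul, ← hi]
      abel
  have hcountEe : S'.count e₁ = m - 1 := by
    rw [hcountE e₁, hMe₁, if_pos rfl]; omega
  rcases eq_or_ne f₁ e₁ with h1 | h1
  · -- e₁ = f₁
    have key : S'.count f₁ = m - 1 := by rw [h1]; exact hcountEe
    have hne : f₂ + g ≠ e₁ := by
      intro h
      have hone : (if f₁ = f₂ + g then 1 else 0) = 1 := if_pos (h1.trans h.symm)
      omega
    have hc1 : (f₂ + g) - e₂ ∈ AddSubgroup.zmultiples e₁ := hcoset _ hf2gmem hne
    have hc2 : f₂ - e₂ ∈ AddSubgroup.zmultiples e₁ :=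
      hcoset _ hf2mem (by rw [← h1]; exact Ne.symm hf12)
    have hgmem : g ∈ AddSubgroup.zmultiples e₁ := by
      have := AddSubgroup.sub_mem _ hc1 hc2
      simpa using this
    exact hg (h1 ▸ hgmem)
  rcases eq_or_ne f₂ e₁ with h2 | h2
  · rw [← h2] at hcountEe
    omega
  · have hc1 : M.count f₁ = S'.count f₁ := by
      rw [hcountE f₁, if_neg (Ne.symm h1)]; omega
    have hc2 : M.count f₂ = S'.count f₂ := by
      rw [hcountE f₂, if_neg (Ne.symm h2)]; omega
    have hge1 : m - 1 ≤ M.count f₁ := by rw [hc1, hcount1]; omega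
    have heq2 : M.count f₂ = m - 2 := hc2.trans hcount2
    have htwo := count_two f₁ f₂ hf12 M
    rw [hMcard] at htwo
    omega
end

section
/- Let m ≥ 4, let G = (ℤ/mℤ)², let g ∈ G, and let S = f₁^[m−1] · f₂^[m−1] · (f₁+f₂) ∈ Υ_nu(G), where (f₁,f₂) is a basis of G. If S' = f₁^[−2] · S · (f₁+g) · (f₁−g) ∈ Υ_nu(G), then g = 0 and S' = S. -/
lemma IsBasis.symm' {G : Type*} [AddCommGroup G] {a b : G} (h : IsBasis a b) : IsBasis b a :=
  ⟨by rw [sup_comm]; exact h.1, by rw [inf_comm]; exact h.2⟩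

lemma nsmul_m_eq_zero {m : ℕ} (x : ZMod m × ZMod m) : m • x = 0 := by
  ext <;> simp [nsmul_eq_mul, ZMod.natCast_self]

lemma zmod_reduce {G : Type*} [AddCommGroup G] (c : G) (n : ℤ) :
    (((n % (addOrderOf c : ℤ)).toNat : ℕ) • c = n • c) ∨ addOrderOf c = 0 := by
  rcases Nat.eq_zero_or_pos (addOrderOf c) with h | h
  · exact Or.inr h
  · left
    have h0 : 0 ≤ n % (addOrderOf c : ℤ) := Int.emod_nonneg n (by exact_mod_cast h.ne')
    rw [← natCast_zsmul, Int.toNat_of_nonneg h0, Int.emod_def, sub_zsmul, mul_comm,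
      mul_zsmul, natCast_zsmul, addOrderOf_nsmul_eq_zero, smul_zero, neg_zero, add_zero]

lemma IsBasis.orderEq {m : ℕ} (hm : 2 ≤ m) {a b : ZMod m × ZMod m} (h : IsBasis a b) :
    addOrderOf a = m := by
  haveI : NeZero m := ⟨by omega⟩
  have hdm : addOrderOf a ∣ m := addOrderOf_dvd_of_nsmul_eq_zero (nsmul_m_eq_zero a)
  have hdm' : addOrderOf b ∣ m := addOrderOf_dvd_of_nsmul_eq_zero (nsmul_m_eq_zero b)
  have hdpos : 0 < addOrderOf a := addOrderOf_pos a
  have hdpos' : 0 < addOrderOf b := addOrderOf_pos b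
  set F : Fin (addOrderOf a) × Fin (addOrderOf b) → ZMod m × ZMod m :=
    fun p => (p.1 : ℕ) • a + (p.2 : ℕ) • b with hF
  have hinj : Function.Injective F := by
    rintro ⟨i, j⟩ ⟨i', j'⟩ hij
    simp only [hF] at hij
    have key : ((i : ℤ) - i') • a = ((j' : ℤ) - j) • b := by
      rw [sub_zsmul, sub_zsmul, natCast_zsmul, natCast_zsmul, natCast_zsmul, natCast_zsmul,
        ← sub_eq_add_neg, ← sub_eq_add_neg, sub_eq_sub_iff_add_eq_add, hij, add_comm]
    have hmem : ((i : ℤ) - i') • a ∈ AddSubgroup.zmultiples a ⊓ AddSubgroup.zmultiples b := by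
      constructor
      · exact AddSubgroup.zsmul_mem _ (AddSubgroup.mem_zmultiples a) _
      · rw [key]; exact AddSubgroup.zsmul_mem _ (AddSubgroup.mem_zmultiples b) _
    rw [h.2] at hmem
    have h0 : ((i : ℤ) - i') • a = 0 := hmem
    have hdvd : (addOrderOf a : ℤ) ∣ ((i : ℤ) - i') := addOrderOf_dvd_iff_zsmul_eq_zero.mpr h0
    have hii : (i : ℤ) - i' = 0 := by
      apply Int.eq_zero_of_abs_lt_dvd hdvd
      have h1 : (i : ℤ) < addOrderOf a := by exact_mod_cast i.2
      have h2 : (i' : ℤ) < addOrderOf a := by exact_mod_cast i'.2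
      have h3 : 0 ≤ (i : ℤ) := by positivity
      have h4 : 0 ≤ (i' : ℤ) := by positivity
      rw [abs_lt]; constructor <;> omega
    have hi : i = i' := by
      apply Fin.ext
      omega
    subst hi
    have hjj : (j : ℕ) • b = (j' : ℕ) • b := add_left_cancel hij
    have h0' : ((j : ℤ) - j') • b = 0 := by
      rw [sub_zsmul, natCast_zsmul, natCast_zsmul, hjj, ← sub_eq_add_neg, sub_self]
    have hdvd' : (addOrderOf b : ℤ) ∣ ((j : ℤ) - j') := addOrderOf_dvd_iff_zsmul_eq_zero.mpr h0'
    have hjj2 : (j : ℤ) - j' = 0 := by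
      apply Int.eq_zero_of_abs_lt_dvd hdvd'
      have h1 : (j : ℤ) < addOrderOf b := by exact_mod_cast j.2
      have h2 : (j' : ℤ) < addOrderOf b := by exact_mod_cast j'.2
      have h3 : 0 ≤ (j : ℤ) := by positivity
      have h4 : 0 ≤ (j' : ℤ) := by positivity
      rw [abs_lt]; constructor <;> omega
    have hj : j = j' := by apply Fin.ext; omega
    rw [hj]
  have hsurj : Function.Surjective F := by
    intro x
    have hx : x ∈ AddSubgroup.zmultiples a ⊔ AddSubgroup.zmultiples b := by
      rw [h.1]; trivial
    rw [AddSubgroup.mem_sup] at hx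
    obtain ⟨y, hy, z, hz, hyz⟩ := hx
    obtain ⟨n, rfl⟩ := AddSubgroup.mem_zmultiples_iff.mp hy
    obtain ⟨k, rfl⟩ := AddSubgroup.mem_zmultiples_iff.mp hz
    have ha := (zmod_reduce a n).resolve_right hdpos.ne'
    have hb := (zmod_reduce b k).resolve_right hdpos'.ne'
    refine ⟨(⟨(n % (addOrderOf a : ℤ)).toNat, ?_⟩, ⟨(k % (addOrderOf b : ℤ)).toNat, ?_⟩), ?_⟩
    · have := Int.emod_lt_of_pos n (show (0:ℤ) < addOrderOf a by exact_mod_cast hdpos)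
      omega
    · have := Int.emod_lt_of_pos k (show (0:ℤ) < addOrderOf b by exact_mod_cast hdpos')
      omega
    · simp only [hF]
      rw [ha, hb, hyz]
  have hcard1 : Fintype.card (Fin (addOrderOf a) × Fin (addOrderOf b)) ≤
      Fintype.card (ZMod m × ZMod m) := Fintype.card_le_of_injective F hinj
  have hcard2 : Fintype.card (ZMod m × ZMod m) ≤
      Fintype.card (Fin (addOrderOf a) × Fin (addOrderOf b)) :=
    Fintype.card_le_of_surjective F hsurj
  rw [Fintype.card_prod, Fintype.card_prod, Fintype.card_fin, Fintype.card_fin, ZMod.card]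
    at hcard1 hcard2
  have hle : addOrderOf a ≤ m := Nat.le_of_dvd (by omega) hdm
  have hle' : addOrderOf b ≤ m := Nat.le_of_dvd (by omega) hdm'
  nlinarith

lemma IsBasis.ne' {m : ℕ} (hm : 2 ≤ m) {a b : ZMod m × ZMod m} (h : IsBasis a b) : a ≠ b := by
  intro hab
  have ha : a ∈ (⊥ : AddSubgroup (ZMod m × ZMod m)) := by
    rw [← h.2]
    exact AddSubgroup.mem_inf.mpr ⟨AddSubgroup.mem_zmultiples a,
      hab ▸ AddSubgroup.mem_zmultiples b⟩
  have ha0 : a = 0 := by simpa using ha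
  have := h.orderEq hm
  rw [ha0, addOrderOf_zero] at this
  omega

lemma aux_ne0 {m : ℕ} (hm : 2 ≤ m) (c : ZMod m × ZMod m) (hc : addOrderOf c = m) : c ≠ 0 := by
  intro h
  rw [h, addOrderOf_zero] at hc
  omega

lemma aux_main {m : ℕ} (hm : 4 ≤ m) (g f₁ f₂ E : ZMod m × ZMod m)
    (hof2 : addOrderOf f₂ = m)
    (hf1ne0 : f₁ ≠ 0) (hf2ne0 : f₂ ≠ 0)
    (hf12 : f₁ ≠ f₂) (hEf2 : E ≠ f₂)
    (hcnt : ∀ x : ZMod m × ZMod m,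
      ((((if f₁ = x then m - 1 else 0) + if f₂ = x then m - 1 else 0) +
            if x = f₁ + f₂ then 1 else 0) -
          if f₁ = x then 2 else 0) +
        ((if x = f₁ - g then 1 else 0) + if x = f₁ + g then 1 else 0) =
      ((if E = x then m - 1 else 0) + if f₂ = x then m - 1 else 0) +
        if x = E + f₂ then 1 else 0) :
    g = 0 := by
  by_cases hg : g = 0
  · exact hg
  exfalso
  have h1 := hcnt f₁
  have k1 : ¬ f₂ = f₁ := fun h => hf12 h.symm
  have k2 : ¬ f₁ = f₁ + f₂ := fun h => hf2ne0 (left_eq_add.mp h)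
  have k3 : ¬ f₁ = f₁ - g := fun h => hg (sub_eq_self.mp h.symm)
  have k4 : ¬ f₁ = f₁ + g := fun h => hg (left_eq_add.mp h)
  rw [if_pos (rfl : f₁ = f₁), if_neg k1, if_neg k2, if_pos (rfl : f₁ = f₁),
    if_neg k3, if_neg k4] at h1
  by_cases hA : E = f₁
  · have h3 : ¬ f₁ = E + f₂ := fun h => hf2ne0 (left_eq_add.mp (by rwa [hA] at h))
    rw [if_pos hA, if_neg h3] at h1
    omega
  · rw [if_neg hA] at h1
    by_cases hB : f₁ = E + f₂
    · rw [if_pos hB] at h1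
      have hm4 : m = 4 := by omega
      have h2 := hcnt E
      have l1 : ¬ f₁ = E := fun h => hA h.symm
      have l2 : ¬ f₂ = E := fun h => hEf2 h.symm
      have l3 : ¬ E = f₁ + f₂ := by
        intro h
        rw [hB, add_assoc] at h
        have h2f : f₂ + f₂ = 0 := (left_eq_add.mp h)
        have h2f' : (2 : ℕ) • f₂ = 0 := by rw [two_nsmul]; exact h2f
        have hdvd := addOrderOf_dvd_of_nsmul_eq_zero h2f'
        rw [hof2] at hdvd
        have := Nat.le_of_dvd (by norm_num) hdvd
        omega
      have l4 : ¬ E = E + f₂ := fun h => hf2ne0 (left_eq_add.mp h)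
      rw [if_neg l1, if_neg l2, if_neg l3, if_neg l1, if_pos (rfl : E = E),
        if_neg l4] at h2
      by_cases u1 : E = f₁ - g
      · by_cases u2 : E = f₁ + g
        · rw [if_pos u1, if_pos u2] at h2; omega
        · rw [if_pos u1, if_neg u2] at h2; omega
      · by_cases u2 : E = f₁ + g
        · rw [if_neg u1, if_pos u2] at h2; omega
        · rw [if_neg u1, if_neg u2] at h2; omega
    · rw [if_neg hB] at h1
      omega

theorem stmt_8 (m : ℕ) (hm : 4 ≤ m) (g f₁ f₂ : ZMod m × ZMod m)
    (hbasis : IsBasis f₁ f₂)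
    (S : Multiset (ZMod m × ZMod m))
    (hS : S = Multiset.replicate (m - 1) f₁ + Multiset.replicate (m - 1) f₂ + {f₁ + f₂})
    (hSNU : S ∈ UpsilonNU m)
    (S' : Multiset (ZMod m × ZMod m))
    (hS' : S' = (S - Multiset.replicate 2 f₁) + {f₁ + g, f₁ - g})
    (hS'U : S' ∈ UpsilonNU m) :
    g = 0 ∧ S' = S := by
  have h2m : 2 ≤ m := by omega
  have hof1 : addOrderOf f₁ = m := hbasis.orderEq h2m
  have hof2 : addOrderOf f₂ = m := hbasis.symm'.orderEq h2m
  have hf1ne0 : f₁ ≠ 0 := aux_ne0 h2m f₁ hof1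
  have hf2ne0 : f₂ ≠ 0 := aux_ne0 h2m f₂ hof2
  have hf12 : f₁ ≠ f₂ := hbasis.ne' h2m
  obtain ⟨e₁, e₂, he, hSe⟩ := hS'U
  have hoE1 : addOrderOf e₁ = m := he.orderEq h2m
  have hoE2 : addOrderOf e₂ = m := he.symm'.orderEq h2m
  have he1ne0 : e₁ ≠ 0 := aux_ne0 h2m e₁ hoE1
  have he2ne0 : e₂ ≠ 0 := aux_ne0 h2m e₂ hoE2
  have he12 : e₁ ≠ e₂ := he.ne' h2m
  have hcnt : ∀ x : ZMod m × ZMod m,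
      ((((if f₁ = x then m - 1 else 0) + if f₂ = x then m - 1 else 0) +
            if x = f₁ + f₂ then 1 else 0) -
          if f₁ = x then 2 else 0) +
        ((if x = f₁ - g then 1 else 0) + if x = f₁ + g then 1 else 0) =
      ((if e₁ = x then m - 1 else 0) + if e₂ = x then m - 1 else 0) +
        if x = e₁ + e₂ then 1 else 0 := by
    intro x
    have h1 := congrArg (Multiset.count x) (hS'.symm.trans hSe)
    rw [hS] at h1
    simpa only [Multiset.count_add, Multiset.count_sub, Multiset.count_replicate,
      Multiset.count_singleton, Multiset.insert_eq_cons, Multiset.count_cons] using h1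
  have hE1s : ¬ e₁ = e₁ + e₂ := fun h => he2ne0 (left_eq_add.mp h)
  have hE2s : ¬ e₂ = e₁ + e₂ := fun h => he1ne0 (right_eq_add.mp h)
  have hRHS_le : ∀ x : ZMod m × ZMod m,
      ((if e₁ = x then m - 1 else 0) + if e₂ = x then m - 1 else 0) +
        (if x = e₁ + e₂ then 1 else 0) ≤ m - 1 := by
    intro x
    by_cases v1 : e₁ = x
    · have v2 : ¬ e₂ = x := fun h => he12 (v1.trans h.symm)
      have v3 : ¬ x = e₁ + e₂ := fun h => hE1s (v1.trans h)
      rw [if_pos v1, if_neg v2, if_neg v3]; omega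
    · by_cases v2 : e₂ = x
      · have v3 : ¬ x = e₁ + e₂ := fun h => hE2s (v2.trans h)
        rw [if_neg v1, if_pos v2, if_neg v3]; omega
      · rw [if_neg v1, if_neg v2]; split_ifs <;> omega
  have h0 := hcnt f₂
  have hb₂ := hRHS_le f₂
  have k1 : ¬ f₁ = f₂ := hf12
  have k2 : ¬ f₂ = f₁ + f₂ := fun h => hf1ne0 (right_eq_add.mp h)
  rw [if_neg k1, if_pos (rfl : f₂ = f₂), if_neg k2, if_neg k1] at h0
  have hu1 : ¬ f₂ = f₁ - g := by
    intro h; rw [if_pos h] at h0; omega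
  have hu2 : ¬ f₂ = f₁ + g := by
    intro h; rw [if_pos h, if_neg hu1] at h0; omega
  rw [if_neg hu1, if_neg hu2] at h0
  have hor : e₁ = f₂ ∨ e₂ = f₂ := by
    by_contra hc
    push_neg at hc
    rw [if_neg hc.1, if_neg hc.2] at h0
    by_cases v3 : f₂ = e₁ + e₂
    · rw [if_pos v3] at h0; omega
    · rw [if_neg v3] at h0; omega
  have hg0 : g = 0 := by
    rcases hor with v | v
    · -- e₁ = f₂, use E := e₂
      refine aux_main hm g f₁ f₂ e₂ hof2 hf1ne0 hf2ne0 hf12 (fun h => he12 (v.trans h.symm)) ?_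
      intro x
      have h1 := hcnt x
      rw [v, add_comm f₂ e₂] at h1
      omega
    · -- e₂ = f₂, use E := e₁
      refine aux_main hm g f₁ f₂ e₁ hof2 hf1ne0 hf2ne0 hf12 (fun h => he12 (h.trans v.symm)) ?_
      intro x
      have h1 := hcnt x
      rw [v] at h1
      exact h1
  refine ⟨hg0, ?_⟩
  have hle : Multiset.replicate 2 f₁ ≤ S := by
    rw [hS]
    exact ((Multiset.replicate_le_replicate f₁).mpr (by omega)).trans
      (le_add_right (le_add_right le_rfl))
  rw [hS', hg0, add_zero, sub_zero]
  have hrepl : ({f₁, f₁} : Multiset (ZMod m × ZMod m)) = Multiset.replicate 2 f₁ := rfl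
  rw [hrepl, tsub_add_cancel_of_le hle]
end

section
/- Let m ≥ 4, let G = (ℤ/mℤ)², let g ∈ G, and let S = f₁^[m−1] · f₂^[m−1] · (f₁+f₂) ∈ Υ_nu(G), where (f₁,f₂) is a basis of G. If S' = f₁^[−1] · f₂^[−1] · S · (f₁+g) · (f₂−g) ∈ Υ_nu(G), then g ∈ {0, −f₁+f₂} and S' = S. -/
lemma zmultiples_ne_top (m : ℕ) (hm : 2 ≤ m) (e : ZMod m × ZMod m) :
    AddSubgroup.zmultiples e ≠ ⊤ := by
  intro h
  haveI : NeZero m := ⟨by omega⟩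
  have h1 : Nat.card (AddSubgroup.zmultiples e) = addOrderOf e := Nat.card_zmultiples e
  have h2 : m • e = 0 := by ext <;> simp [nsmul_eq_mul]
  have h3 : addOrderOf e ∣ m := addOrderOf_dvd_of_nsmul_eq_zero h2
  have h4 : Nat.card (ZMod m × ZMod m) = m * m := by
    simp [Nat.card_prod, Nat.card_zmod]
  rw [h, AddSubgroup.card_top, h4] at h1
  have := Nat.le_of_dvd (by omega) h3
  nlinarith

lemma basis_facts (m : ℕ) (hm : 2 ≤ m) {e₁ e₂ : ZMod m × ZMod m} (h : IsBasis e₁ e₂) :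
    e₁ ≠ 0 ∧ e₂ ≠ 0 ∧ e₁ ≠ e₂ := by
  obtain ⟨hsup, hinf⟩ := h
  refine ⟨?_, ?_, ?_⟩
  · rintro rfl
    rw [AddSubgroup.zmultiples_zero_eq_bot, bot_sup_eq] at hsup
    exact zmultiples_ne_top m hm e₂ hsup
  · rintro rfl
    rw [AddSubgroup.zmultiples_zero_eq_bot, sup_bot_eq] at hsup
    exact zmultiples_ne_top m hm e₁ hsup
  · rintro rfl
    rw [sup_idem] at hsup
    exact zmultiples_ne_top m hm e₁ hsup

lemma count_nu (m : ℕ) (hm : 2 ≤ m) {e₁ e₂ : ZMod m × ZMod m} (h : IsBasis e₁ e₂)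
    (x : ZMod m × ZMod m) :
    Multiset.count x
      (Multiset.replicate (m - 1) e₁ + Multiset.replicate (m - 1) e₂ + {e₁ + e₂})
      = 0 ∨
    Multiset.count x
      (Multiset.replicate (m - 1) e₁ + Multiset.replicate (m - 1) e₂ + {e₁ + e₂})
      = 1 ∨
    Multiset.count x
      (Multiset.replicate (m - 1) e₁ + Multiset.replicate (m - 1) e₂ + {e₁ + e₂})
      = m - 1 := by
  obtain ⟨h1, h2, h12⟩ := basis_facts m hm h
  have hs1 : e₁ + e₂ ≠ e₁ := by simpa using h2
  have hs2 : e₁ + e₂ ≠ e₂ := by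
    intro hc
    exact h1 (by linear_combination (norm := module) hc)
  rcases eq_or_ne x e₁ with rfl | hx1
  · right; right
    simp [Multiset.count_replicate, Multiset.count_singleton, h12, Ne.symm h12,
      hs1, Ne.symm hs1, hs2, Ne.symm hs2]
  rcases eq_or_ne x e₂ with rfl | hx2
  · right; right
    simp [Multiset.count_replicate, Multiset.count_singleton, h12, Ne.symm h12,
      hs1, Ne.symm hs1, hs2, Ne.symm hs2]
  rcases eq_or_ne x (e₁ + e₂) with rfl | hx3
  · right; left
    simp [Multiset.count_replicate, Multiset.count_singleton, h12, Ne.symm h12,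
      hs1, Ne.symm hs1, hs2, Ne.symm hs2]
  · left
    simp [Multiset.count_replicate, Multiset.count_singleton, hx1, Ne.symm hx1,
      hx2, Ne.symm hx2, hx3, Ne.symm hx3]

theorem stmt_10 (m : ℕ) (hm : 4 ≤ m) (g f₁ f₂ : ZMod m × ZMod m)
    (hbasis : IsBasis f₁ f₂)
    (S : Multiset (ZMod m × ZMod m))
    (hS : S = Multiset.replicate (m - 1) f₁ + Multiset.replicate (m - 1) f₂ + {f₁ + f₂})
    (hSNU : S ∈ UpsilonNU m)
    (S' : Multiset (ZMod m × ZMod m))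
    (hS' : S' = (S - {f₁, f₂}) + {f₁ + g, f₂ - g})
    (hS'U : S' ∈ UpsilonNU m) :
    (g = 0 ∨ g = -f₁ + f₂) ∧ S' = S := by
  have hm2 : 2 ≤ m := by omega
  obtain ⟨hf1, hf2, hf12⟩ := basis_facts m hm2 hbasis
  have hs1 : f₁ + f₂ ≠ f₁ := by simpa using hf2
  -- count of f₁ in S'
  have hcS : Multiset.count f₁ S = m - 1 := by
    simp [hS, Multiset.count_replicate, Multiset.count_singleton, Ne.symm hf12, Ne.symm hs1]
  have hcpair : Multiset.count f₁ ({f₁, f₂} : Multiset (ZMod m × ZMod m)) = 1 := by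
    simp [Multiset.count_cons, Multiset.count_singleton, hf12]
  have hP : f₁ + g = f₁ ↔ g = 0 := by
    constructor
    · intro h; linear_combination (norm := module) h
    · intro h; simp [h]
  have hQ : f₂ - g = f₁ ↔ g = -f₁ + f₂ := by
    constructor
    · intro h; linear_combination (norm := module) -h
    · intro h; linear_combination (norm := module) -h
  have hnotboth : ¬ (g = 0 ∧ g = -f₁ + f₂) := by
    rintro ⟨rfl, hq⟩
    exact hf12 (by linear_combination (norm := module) hq)
  have hcnew : Multiset.count f₁ ({f₁ + g, f₂ - g} : Multiset (ZMod m × ZMod m)) =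
      (if g = 0 then 1 else 0) + (if g = -f₁ + f₂ then 1 else 0) := by
    rw [show ({f₁ + g, f₂ - g} : Multiset (ZMod m × ZMod m)) = (f₁ + g) ::ₘ {f₂ - g} from rfl,
      Multiset.count_cons, Multiset.count_singleton]
    simp only [show (f₁ = f₁ + g) ↔ g = 0 from ⟨fun h => hP.1 h.symm, fun h => by simp [h]⟩,
      show (f₁ = f₂ - g) ↔ g = -f₁ + f₂ from ⟨fun h => hQ.1 h.symm, fun h => (hQ.2 h).symm⟩]
    by_cases hp : g = 0 <;> by_cases hq : g = -f₁ + f₂ <;> simp [hp, hq, add_comm]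
  have hcS' : Multiset.count f₁ S' = (m - 1) - 1 +
      ((if g = 0 then 1 else 0) + (if g = -f₁ + f₂ then 1 else 0)) := by
    rw [hS', Multiset.count_add, Multiset.count_sub, hcS, hcpair, hcnew]
  -- from NU form, count is 0, 1 or m-1
  obtain ⟨e₁, e₂, hbe, hSe⟩ := hS'U
  have hmem := count_nu m hm2 hbe f₁
  rw [← hSe] at hmem
  rw [hcS'] at hmem
  have hor : g = 0 ∨ g = -f₁ + f₂ := by
    by_cases hp : g = 0
    · exact Or.inl hp
    by_cases hq : g = -f₁ + f₂
    · exact Or.inr hq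
    · rw [if_neg hp, if_neg hq] at hmem; omega
  refine ⟨hor, ?_⟩
  -- S' = S
  have hle : ({f₁, f₂} : Multiset (ZMod m × ZMod m)) ≤ S := by
    rw [hS]
    refine le_trans ?_ (Multiset.le_add_right _ _)
    rw [show ({f₁, f₂} : Multiset (ZMod m × ZMod m)) = {f₁} + {f₂} from
      (Multiset.singleton_add f₁ {f₂}).symm]
    refine add_le_add ?_ ?_ <;>
      · rw [← Multiset.replicate_one]
        exact (Multiset.replicate_le_replicate _).2 (by omega)
  have hpair : ({f₁ + g, f₂ - g} : Multiset (ZMod m × ZMod m)) = {f₁, f₂} := by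
    rcases hor with rfl | rfl
    · simp
    · have h1 : f₁ + (-f₁ + f₂) = f₂ := by module
      have h2 : f₂ - (-f₁ + f₂) = f₁ := by module
      rw [h1, h2]
      exact Multiset.cons_swap f₂ f₁ 0
  rw [hS', hpair, tsub_add_cancel_of_le hle]
end
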